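/- Let 1 ≤ q < ∞, α real with α ≠ −1 + 1/q, 0 < b ≤ ∞, g ∈ L^q(0,b). Let f ∈ W^{2,1}_loc(0,b) be a positive solution of f'' = g·f^α a.e. on (0,b), satisfying the boundary condition: with κ = −sign(α + 1 − 1/q), liminf_{R→b} κ|f'(R)|^{2q−2}f'(R) f(R)^{−q(α+1)+1} − limsup_{r→0} κ|f'(r)|^{2q−2}f'(r) f(r)^{−q(α+1)+1} ≤ 0. Then ∫_0^b |f'(x)|^{2q} f(x)^{−q(α+1)} dx ≤ ((2q−1)/|q−1+αq|)^q ∫_0^b |g(x)|^q dx. -/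

import Mathlib

open MeasureTheory Set Filter

private lemma absrpow_cont {p : ℝ} (hp : 0 ≤ p) : Continuous (fun s : ℝ => |s| ^ p) :=
  continuous_abs.rpow_const (fun _ => Or.inr hp)

private lemma hasDerivAt_W {q : ℝ} (hq : 1 ≤ q) (t : ℝ) :
    HasDerivAt (fun s : ℝ => |s| ^ (2*q-2) * s) ((2*q-1) * |t| ^ (2*q-2)) t := by
  rcases eq_or_lt_of_le hq with h1 | h1
  · have e2 : (2*q-2 : ℝ) = 0 := by rw [← h1]; ring
    have e1 : (2*q-1 : ℝ) = 1 := by rw [← h1]; ring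
    simp only [e1, e2, Real.rpow_zero, one_mul]
    exact hasDerivAt_id t
  · have hp : (0:ℝ) < 2*q-2 := by linarith
    rcases lt_trichotomy t 0 with ht | rfl | ht
    · have hmt : (0:ℝ) < -t := by linarith
      have hneg : HasDerivAt (fun s : ℝ => -s) (-1) t := (hasDerivAt_id t).neg
      have hpow : HasDerivAt (fun s : ℝ => (-s) ^ (2*q-2)) ((-1) * (2*q-2) * (-t) ^ (2*q-2-1)) t :=
        hneg.rpow_const (Or.inl (ne_of_gt hmt))
      have hmul := hpow.mul (hasDerivAt_id t)
      simp only [id_eq] at hmul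
      have heq : (fun s : ℝ => |s| ^ (2*q-2) * s) =ᶠ[nhds t] (fun s : ℝ => (-s) ^ (2*q-2) * s) := by
        filter_upwards [isOpen_Iio.mem_nhds ht] with s hs
        rw [abs_of_neg hs]
      refine HasDerivAt.congr_of_eventuallyEq ?_ heq
      refine hmul.congr_deriv ?_
      rw [abs_of_neg ht]
      have e1 : (-t) ^ (2*q-2-1) * (-t) = (-t) ^ (2*q-2) := by
        rw [← Real.rpow_add_one (ne_of_gt hmt) (2*q-2-1)]
        norm_num
      linear_combination (2*q-2) * e1
    · have h0 : HasDerivAt (fun s : ℝ => |s| ^ (2*q-2) * s) 0 0 := by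
        rw [hasDerivAt_iff_tendsto_slope]
        have hc : Tendsto (fun s : ℝ => |s| ^ (2*q-2)) (nhds 0) (nhds 0) := by
          have h := (absrpow_cont hp.le).tendsto 0
          simpa [Real.zero_rpow (ne_of_gt hp)] using h
        apply Tendsto.congr' _ (hc.mono_left nhdsWithin_le_nhds)
        filter_upwards [self_mem_nhdsWithin] with s hs
        have hs0 : s ≠ 0 := hs
        simp only [slope_def_field]
        field_simp
        simp
      convert h0 using 1
      simp [Real.zero_rpow (ne_of_gt hp)]
    · have hpow : HasDerivAt (fun s : ℝ => s ^ (2*q-1)) ((2*q-1) * t ^ (2*q-1-1)) t :=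
        Real.hasDerivAt_rpow_const (Or.inl (ne_of_gt ht))
      have heq : (fun s : ℝ => |s| ^ (2*q-2) * s) =ᶠ[nhds t] (fun s : ℝ => s ^ (2*q-1)) := by
        filter_upwards [isOpen_Ioi.mem_nhds ht] with s hs
        rw [abs_of_pos hs, ← Real.rpow_add_one (ne_of_gt hs) (2*q-2),
          show (2*q-2+1 : ℝ) = 2*q-1 by ring]
      refine HasDerivAt.congr_of_eventuallyEq ?_ heq
      refine hpow.congr_deriv ?_
      rw [abs_of_pos ht, show (2*q-1-1 : ℝ) = 2*q-2 by ring]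

private lemma W_mul_self {q : ℝ} (hq : 1 ≤ q) (t : ℝ) :
    |t| ^ (2*q-2) * t * t = |t| ^ (2*q) := by
  rcases eq_or_ne t 0 with rfl | ht
  · simp [Real.zero_rpow (show (2*q : ℝ) ≠ 0 by nlinarith)]
  · have h1 : t * t = |t| ^ (2:ℝ) := by
      rw [show ((2:ℝ)) = ((2:ℕ):ℝ) by norm_num, Real.rpow_natCast, sq_abs]
      ring
    rw [mul_assoc, h1, ← Real.rpow_add (abs_pos.2 ht)]
    norm_num

theorem homogeneous_eigenvalue_gradient_estimate
    (q α : ℝ) (hq : 1 ≤ q) (hα : α ≠ -1 + 1 / q)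
    (b : EReal) (hb : 0 < b)
    (g : ℝ → ℝ)
    (hg : IntegrableOn (fun x => |g x| ^ q) {x : ℝ | 0 < x ∧ (↑x : EReal) < b})
    (f : ℝ → ℝ)
    (hfd : ∀ x ∈ {x : ℝ | 0 < x ∧ (↑x : EReal) < b}, DifferentiableAt ℝ f x)
    (hfd' : ∀ x ∈ {x : ℝ | 0 < x ∧ (↑x : EReal) < b}, DifferentiableAt ℝ (deriv f) x)
    (hf'' : LocallyIntegrableOn (deriv (deriv f)) {x : ℝ | 0 < x ∧ (↑x : EReal) < b})
    (hpos : ∀ x ∈ {x : ℝ | 0 < x ∧ (↑x : EReal) < b}, 0 < f x)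
    (hode : ∀ᵐ x : ℝ, x ∈ {x : ℝ | 0 < x ∧ (↑x : EReal) < b} →
      deriv (deriv f) x = g x * f x ^ α)
    (hbdry :
      liminf
          (fun R => -(Real.sign (α + 1 - 1 / q)) * |deriv f R| ^ (2 * q - 2) * deriv f R *
            f R ^ (-(q * (α + 1)) + 1))
          (Filter.comap (fun x : ℝ => (↑x : EReal)) (nhdsWithin b (Iio b))) -
        limsup
          (fun r => -(Real.sign (α + 1 - 1 / q)) * |deriv f r| ^ (2 * q - 2) * deriv f r *
            f r ^ (-(q * (α + 1)) + 1))
          (nhdsWithin 0 (Ioi 0))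
        ≤ 0) :
    ∫ x in {x : ℝ | 0 < x ∧ (↑x : EReal) < b},
        |deriv f x| ^ (2 * q) * f x ^ (-(q * (α + 1))) ≤
      ((2 * q - 1) / |q - 1 + α * q|) ^ q *
        ∫ x in {x : ℝ | 0 < x ∧ (↑x : EReal) < b}, |g x| ^ q := by
  have hq0 : (0:ℝ) < q := lt_of_lt_of_le one_pos hq
  set S := {x : ℝ | 0 < x ∧ (↑x : EReal) < b} with hSdef
  set u := deriv f with hu
  set σ := Real.sign (α + 1 - 1 / q) with hσ
  set c := q - 1 + α * q with hc
  set F : ℝ → ℝ := fun x => |u x| ^ (2 * q) * f x ^ (-(q * (α + 1))) with hF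
  set Φ : ℝ → ℝ := fun R => -σ * |u R| ^ (2 * q - 2) * u R * f R ^ (-(q * (α + 1)) + 1) with hΦ
  set Lb := Filter.comap (fun x : ℝ => (↑x : EReal)) (nhdsWithin b (Iio b)) with hLb
  set L0 := nhdsWithin (0:ℝ) (Ioi 0) with hL0
  -- basic facts
  have hSopen : IsOpen S := by
    have hseq : S = Ioi (0:ℝ) ∩ (fun x : ℝ => (x : EReal)) ⁻¹' (Iio b) := by
      ext x; exact Iff.rfl
    rw [hseq]
    exact isOpen_Ioi.inter (isOpen_Iio.preimage continuous_coe_real_ereal)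
  have hSmeas : MeasurableSet S := hSopen.measurableSet
  have hc0 : c ≠ 0 := by
    intro h
    apply hα
    have h2 : α * q = 1 - q := by rw [hc] at h; linarith
    field_simp
    linarith
  have hσpm : σ = 1 ∨ σ = -1 := by
    rcases lt_trichotomy (α + 1 - 1/q) 0 with h | h | h
    · right; rw [hσ]; exact Real.sign_of_neg h
    · exfalso; apply hα; linarith [h]
    · left; rw [hσ]; exact Real.sign_of_pos h
  have hceq : c = q * (α + 1 - 1/q) := by rw [hc]; field_simp; ring
  have hσc : σ * c = |c| := by
    rcases lt_trichotomy (α + 1 - 1/q) 0 with h | h | h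
    · have hcneg : c < 0 := by rw [hceq]; exact mul_neg_of_pos_of_neg hq0 h
      rw [hσ, Real.sign_of_neg h, abs_of_neg hcneg]; ring
    · exfalso; apply hα; linarith [h]
    · have hcpos : 0 < c := by rw [hceq]; exact mul_pos hq0 h
      rw [hσ, Real.sign_of_pos h, abs_of_pos hcpos]; ring
  have hIcc : ∀ {r R : ℝ}, 0 < r → (R : EReal) < b → Icc r R ⊆ S := by
    intro r R hr hR x hx
    exact ⟨lt_of_lt_of_le hr hx.1, lt_of_le_of_lt (EReal.coe_le_coe_iff.2 hx.2) hR⟩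
  have hfc : ContinuousOn f S := fun x hx => (hfd x hx).continuousAt.continuousWithinAt
  have huc : ContinuousOn u S := fun x hx => (hfd' x hx).continuousAt.continuousWithinAt
  have hG0 : 0 ≤ ∫ x in S, |g x| ^ q :=
    setIntegral_nonneg hSmeas fun x _ => Real.rpow_nonneg (abs_nonneg _) _
  have hC0 : (0:ℝ) ≤ ((2 * q - 1) / |c|) ^ q :=
    Real.rpow_nonneg (div_nonneg (by linarith) (abs_nonneg _)) _
  by_cases hInt : IntegrableOn F S volume
  swap
  · rw [integral_undef hInt]
    exact mul_nonneg hC0 hG0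
  set G := ∫ x in S, |g x| ^ q with hGdef
  set I' := ∫ x in S, F x with hI'
  have hF_nonneg : ∀ x ∈ S, 0 ≤ F x := fun x hx =>
    mul_nonneg (Real.rpow_nonneg (abs_nonneg _) _) (Real.rpow_pos_of_pos (hpos x hx) _).le
  have hI'0 : 0 ≤ I' := setIntegral_nonneg hSmeas hF_nonneg
  set H₀ := I' ^ (1 - 1/q) * G ^ (1/q) with hH₀
  set H := (2*q-1) * H₀ with hH
  have hH₀0 : 0 ≤ H₀ := mul_nonneg (Real.rpow_nonneg hI'0 _) (Real.rpow_nonneg hG0 _)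
  have hH0 : 0 ≤ H := mul_nonneg (by linarith) hH₀0
  set P : ℝ → ℝ := fun x => |u x| ^ (2*q-2) * f x ^ ((α+1)*(1-q)) with hP
  set E : ℝ → ℝ → ℝ := fun r R => ∫ x in Ioo r R, P x * g x with hE
  set J : ℝ → ℝ → ℝ := fun r R => ∫ x in Ioo r R, F x with hJ
  have hF_ae : (0:ℝ → ℝ) ≤ᶠ[ae (volume.restrict S)] F := by
    filter_upwards [ae_restrict_mem hSmeas] with x hx using hF_nonneg x hx
  have hJI : ∀ r R : ℝ, 0 < r → (R : EReal) < b → J r R ≤ I' := by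
    intro r R hr hR
    refine setIntegral_mono_set hInt hF_ae (HasSubset.Subset.eventuallyLE ?_)
    intro x hx
    exact hIcc hr hR (Ioo_subset_Icc_self hx)
  have hJ0 : ∀ r R : ℝ, 0 < r → (R : EReal) < b → 0 ≤ J r R := by
    intro r R hr hR
    refine setIntegral_nonneg measurableSet_Ioo fun x hx => ?_
    exact hF_nonneg x (hIcc hr hR (Ioo_subset_Icc_self hx))
  -- measurability and integrability infrastructure
  have hgm : AEMeasurable g (volume.restrict S) := by
    have h1 : AEMeasurable (fun x => deriv u x * f x ^ (-α)) (volume.restrict S) := by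
      apply AEMeasurable.mul
      · exact (measurable_deriv u).aemeasurable
      · exact (hfc.aemeasurable hSmeas).pow_const (-α)
    have he : (fun x => deriv u x * f x ^ (-α)) =ᶠ[ae (volume.restrict S)] g := by
      filter_upwards [ae_restrict_of_ae hode, ae_restrict_mem hSmeas] with x hODE hxS
      rw [hODE hxS, mul_assoc, ← Real.rpow_add (hpos x hxS), add_neg_cancel, Real.rpow_zero,
        mul_one]
    exact h1.congr he
  have hgsm : ∀ {r R : ℝ}, 0 < r → (R : EReal) < b →
      AEStronglyMeasurable g (volume.restrict (Ioo r R)) := by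
    intro r R hr hR
    have hsub : Ioo r R ⊆ S := fun x hx => hIcc hr hR (Ioo_subset_Icc_self hx)
    exact (hgm.mono_measure (Measure.restrict_mono hsub le_rfl)).aestronglyMeasurable
  have hgint : ∀ {r R : ℝ}, 0 < r → (R : EReal) < b → IntegrableOn g (Ioo r R) := by
    intro r R hr hR
    have hsub : Ioo r R ⊆ S := fun x hx => hIcc hr hR (Ioo_subset_Icc_self hx)
    have hb1 : IntegrableOn (fun x => 1 + |g x| ^ q) (Ioo r R) := by
      apply Integrable.add
      · exact integrableOn_const measure_Ioo_lt_top.ne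
      · exact hg.mono_set hsub
    apply Integrable.mono hb1 (hgsm hr hR)
    apply Eventually.of_forall
    intro x
    have h2 : |g x| ≤ 1 + |g x| ^ q := by
      rcases le_or_gt (|g x|) 1 with h | h
      · have := Real.rpow_nonneg (abs_nonneg (g x)) q
        linarith
      · have h3 : |g x| ^ (1:ℝ) ≤ |g x| ^ q :=
          Real.rpow_le_rpow_of_exponent_le h.le hq
        rw [Real.rpow_one] at h3
        linarith
    have h4 : (0:ℝ) ≤ 1 + |g x| ^ q := by
      have := Real.rpow_nonneg (abs_nonneg (g x)) q
      linarith
    rw [Real.norm_eq_abs, Real.norm_eq_abs, abs_of_nonneg h4]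
    exact h2
  have hPcOn : ∀ {r R : ℝ}, 0 < r → (R : EReal) < b → ContinuousOn P (Icc r R) := by
    intro r R hr hR
    apply ContinuousOn.mul
    · exact (absrpow_cont (by linarith)).comp_continuousOn (huc.mono (hIcc hr hR))
    · exact (hfc.mono (hIcc hr hR)).rpow_const fun x hx => Or.inl (ne_of_gt (hpos x (hIcc hr hR hx)))
  have hPg_int : ∀ {r R : ℝ}, 0 < r → (R : EReal) < b →
      IntegrableOn (fun x => P x * g x) (Ioo r R) := by
    intro r R hr hR
    exact IntegrableOn.continuousOn_mul_of_subset (hPcOn hr hR) (hgint hr hR) isCompact_Icc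
      measurableSet_Ioo Ioo_subset_Icc_self
  -- Key identity via FTC
  have hKI : ∀ r R : ℝ, 0 < r → r < R → (R : EReal) < b →
      Φ R - Φ r = |c| * J r R - σ * ((2*q-1) * E r R) := by
    intro r R hr hrR hRb
    have hIccS : Icc r R ⊆ S := hIcc hr hRb
    have hIooS : Ioo r R ⊆ S := fun x hx => hIccS (Ioo_subset_Icc_self hx)
    set ψ : ℝ → ℝ := fun y => |u y| ^ (2*q-2) * u y * f y ^ (-(q*(α+1)) + 1) with hψ
    set D : ℝ → ℝ := fun x =>
      ((2*q-1) * |u x| ^ (2*q-2) * f x ^ (-(q*(α+1)) + 1)) * deriv u x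
        + (|u x| ^ (2*q-2) * u x) *
          (u x * (-(q*(α+1)) + 1) * f x ^ (-(q*(α+1)) + 1 - 1)) with hD
    have hderiv : ∀ x ∈ Icc r R, HasDerivAt ψ (D x) x := by
      intro x hx
      have hxS := hIccS hx
      have hu' : HasDerivAt u (deriv u x) x := (hfd' x hxS).hasDerivAt
      have hW := (hasDerivAt_W hq (u x)).comp x hu'
      have hf' : HasDerivAt f (u x) x := (hfd x hxS).hasDerivAt
      have hfp : HasDerivAt (fun y => f y ^ (-(q*(α+1)) + 1))
          ((u x) * (-(q*(α+1)) + 1) * f x ^ (-(q*(α+1)) + 1 - 1)) x :=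
        hf'.rpow_const (Or.inl (ne_of_gt (hpos x hxS)))
      have hmul := HasDerivAt.mul hW hfp
      have hval : D x = ((2*q-1) * |u x| ^ (2*q-2) * deriv u x) * f x ^ (-(q*(α+1)) + 1)
          + (|u x| ^ (2*q-2) * u x) *
            ((u x) * (-(q*(α+1)) + 1) * f x ^ (-(q*(α+1)) + 1 - 1)) := by
        simp only [hD]; ring
      rw [hval]
      exact hmul
    have hucOn : ContinuousOn u (Icc r R) := huc.mono hIccS
    have hfcOn : ContinuousOn f (Icc r R) := hfc.mono hIccS
    have hC1 : ContinuousOn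
        (fun x => (2*q-1) * |u x| ^ (2*q-2) * f x ^ (-(q*(α+1)) + 1)) (Icc r R) := by
      apply ContinuousOn.mul
      · exact continuousOn_const.mul ((absrpow_cont (by linarith)).comp_continuousOn hucOn)
      · exact hfcOn.rpow_const fun x hx => Or.inl (ne_of_gt (hpos x (hIccS hx)))
    have hC2 : ContinuousOn (fun x => (|u x| ^ (2*q-2) * u x) *
        (u x * (-(q*(α+1)) + 1) * f x ^ (-(q*(α+1)) + 1 - 1))) (Icc r R) := by
      apply ContinuousOn.mul
      · exact ((absrpow_cont (by linarith)).comp_continuousOn hucOn).mul hucOn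
      · apply ContinuousOn.mul (hucOn.mul continuousOn_const)
        exact hfcOn.rpow_const fun x hx => Or.inl (ne_of_gt (hpos x (hIccS hx)))
    have hDint : IntervalIntegrable D volume r R := by
      apply IntegrableOn.intervalIntegrable
      rw [uIcc_of_le hrR.le]
      simp only [hD]
      apply Integrable.add
      · exact IntegrableOn.continuousOn_mul hC1
          (hf''.integrableOn_compact_subset hIccS isCompact_Icc) isCompact_Icc
      · exact hC2.integrableOn_compact isCompact_Icc
    have hFTC : ∫ y in r..R, D y = ψ R - ψ r :=
      intervalIntegral.integral_eq_sub_of_hasDerivAt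
        (by rw [uIcc_of_le hrR.le]; exact hderiv) hDint
    have hIoc : ∫ y in r..R, D y = ∫ y in Ioo r R, D y := by
      rw [intervalIntegral.integral_of_le hrR.le, integral_Ioc_eq_integral_Ioo]
    have hae2 : ∀ᵐ x : ℝ, x ∈ Ioo r R → D x = (2*q-1) * (P x * g x) - c * F x := by
      filter_upwards [hode] with x hODE hx
      have hxS : x ∈ S := hIooS hx
      have hfx : 0 < f x := hpos x hxS
      have e1 : f x ^ (-(q*(α+1)) + 1) * f x ^ α = f x ^ ((α+1)*(1-q)) := by
        rw [← Real.rpow_add hfx]; congr 1; ring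
      have e2 := W_mul_self hq (u x)
      simp only [hD, hP, hF]
      rw [hODE hxS, show (-(q*(α+1)) + 1 - 1 : ℝ) = -(q*(α+1)) by ring, hc]
      linear_combination ((2*q-1) * g x * |u x| ^ (2*q-2)) * e1 +
        ((-(q*(α+1)) + 1) * f x ^ (-(q*(α+1)))) * e2
    have hF_int : IntegrableOn F (Ioo r R) := hInt.mono_set hIooS
    have hsplit : ∫ x in Ioo r R, D x = (2*q-1) * E r R - c * J r R := by
      rw [setIntegral_congr_ae measurableSet_Ioo hae2]
      rw [integral_sub ((hPg_int hr hRb).const_mul _) (hF_int.const_mul _)]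
      simp only [hE, hJ]
      rw [integral_const_mul, integral_const_mul]
    calc Φ R - Φ r = -σ * (ψ R - ψ r) := by simp only [hΦ, hψ]; ring
      _ = -σ * ((2*q-1) * E r R - c * J r R) := by rw [← hFTC, hIoc, hsplit]
      _ = |c| * J r R - σ * ((2*q-1) * E r R) := by rw [← hσc]; ring
  -- Hölder estimate
  have hEest : ∀ r R : ℝ, 0 < r → r < R → (R : EReal) < b → |E r R| ≤ H₀ := by
    intro r R hr hrR hRb
    have hIccS : Icc r R ⊆ S := hIcc hr hRb
    have hIooS : Ioo r R ⊆ S := fun x hx => hIccS (Ioo_subset_Icc_self hx)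
    have hPnn : ∀ x ∈ Ioo r R, 0 ≤ P x := fun x hx =>
      mul_nonneg (Real.rpow_nonneg (abs_nonneg _) _)
        (Real.rpow_pos_of_pos (hpos x (hIooS hx)) _).le
    have hgq_ae : (0:ℝ → ℝ) ≤ᶠ[ae (volume.restrict S)] (fun x => |g x| ^ q) :=
      Eventually.of_forall fun x => Real.rpow_nonneg (abs_nonneg _) _
    have hsubae : Ioo r R ≤ᶠ[ae volume] S := HasSubset.Subset.eventuallyLE hIooS
    have h11 : ∫ x in Ioo r R, |g x| ^ q ≤ G := setIntegral_mono_set hg hgq_ae hsubae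
    have hgqnn : 0 ≤ ∫ x in Ioo r R, |g x| ^ q :=
      setIntegral_nonneg measurableSet_Ioo fun x _ => Real.rpow_nonneg (abs_nonneg _) _
    have h1 : |E r R| ≤ ∫ x in Ioo r R, P x * |g x| := by
      simp only [hE]
      calc |∫ x in Ioo r R, P x * g x| = ‖∫ x in Ioo r R, P x * g x‖ :=
            (Real.norm_eq_abs _).symm
        _ ≤ ∫ x in Ioo r R, ‖P x * g x‖ := norm_integral_le_integral_norm _
        _ = ∫ x in Ioo r R, P x * |g x| := by
            apply setIntegral_congr_fun measurableSet_Ioo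
            intro x hx
            simp only [Real.norm_eq_abs]
            rw [abs_mul, abs_of_nonneg (hPnn x hx)]
    rcases eq_or_lt_of_le hq with hq1 | hq1
    · -- q = 1
      have h2 : ∫ x in Ioo r R, P x * |g x| = ∫ x in Ioo r R, |g x| ^ q := by
        apply setIntegral_congr_fun measurableSet_Ioo
        intro x hx
        simp only [hP]
        rw [show (2*q-2 : ℝ) = 0 by rw [← hq1]; ring,
          show ((α+1)*(1-q) : ℝ) = 0 by rw [← hq1]; ring,
          Real.rpow_zero, Real.rpow_zero, mul_one, one_mul, ← hq1, Real.rpow_one]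
      have hH₀G : H₀ = G := by
        rw [hH₀, show (1 - 1/q : ℝ) = 0 by rw [← hq1]; norm_num,
          show (1/q : ℝ) = 1 by rw [← hq1]; norm_num, Real.rpow_zero, Real.rpow_one, one_mul]
      rw [hH₀G]
      calc |E r R| ≤ ∫ x in Ioo r R, P x * |g x| := h1
        _ = ∫ x in Ioo r R, |g x| ^ q := h2
        _ ≤ G := h11
    · -- q > 1
      set p := q / (q-1) with hp
      have hq1' : (0:ℝ) < q - 1 := by linarith
      have hp0 : 0 < p := by rw [hp]; positivity
      have hpq : p.HolderConjugate q := by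
        refine Real.holderConjugate_iff.mpr ⟨?_, ?_⟩
        · rw [hp, lt_div_iff₀ hq1']; linarith
        · rw [hp]; field_simp; ring
      haveI : IsFiniteMeasure (volume.restrict (Ioo r R)) :=
        ⟨by rw [Measure.restrict_apply_univ]; exact measure_Ioo_lt_top⟩
      obtain ⟨C, hC⟩ := isCompact_Icc.exists_bound_of_continuousOn (hPcOn hr hRb)
      have hPsm : AEStronglyMeasurable P (volume.restrict (Ioo r R)) :=
        ((hPcOn hr hRb).mono Ioo_subset_Icc_self).aestronglyMeasurable measurableSet_Ioo
      have hMP : MemLp P (ENNReal.ofReal p) (volume.restrict (Ioo r R)) := by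
        apply MemLp.of_bound hPsm C
        filter_upwards [ae_restrict_mem measurableSet_Ioo] with x hx
        exact hC x (Ioo_subset_Icc_self hx)
      have hq_ne0 : ENNReal.ofReal q ≠ 0 := by
        simp [ENNReal.ofReal_eq_zero, not_le, hq0]
      have hMg0 : MemLp g (ENNReal.ofReal q) (volume.restrict (Ioo r R)) := by
        rw [← memLp_norm_rpow_iff (hgsm hr hRb) hq_ne0 ENNReal.ofReal_ne_top,
          ENNReal.div_self hq_ne0 ENNReal.ofReal_ne_top, memLp_one_iff_integrable]
        have h9 : Integrable (fun x => |g x| ^ q) (volume.restrict (Ioo r R)) :=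
          hg.mono_set hIooS
        apply h9.congr
        apply Eventually.of_forall
        intro x
        simp only [Real.norm_eq_abs, ENNReal.toReal_ofReal hq0.le]
      have hMg : MemLp (fun x => |g x|) (ENNReal.ofReal q) (volume.restrict (Ioo r R)) := by
        have h := hMg0.norm
        simpa [Real.norm_eq_abs] using h
      have hhold := integral_mul_le_Lp_mul_Lq_of_nonneg hpq
        (by filter_upwards [ae_restrict_mem measurableSet_Ioo] with x hx using hPnn x hx)
        (Eventually.of_forall fun x => abs_nonneg (g x)) hMP hMg
      have hPp : ∫ x in Ioo r R, P x ^ p = J r R := by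
        apply setIntegral_congr_fun measurableSet_Ioo
        intro x hx
        have hfx : 0 < f x := hpos x (hIooS hx)
        have e3 : (2*q-2) * p = 2*q := by rw [hp]; field_simp
        have e4 : ((α+1)*(1-q)) * p = -(q*(α+1)) := by rw [hp]; field_simp; ring
        simp only [hP, hF]
        rw [Real.mul_rpow (Real.rpow_nonneg (abs_nonneg _) _)
            (Real.rpow_pos_of_pos hfx _).le,
          ← Real.rpow_mul (abs_nonneg _), ← Real.rpow_mul hfx.le, e3, e4]
      have h12 : (∫ x in Ioo r R, P x ^ p) ^ (1/p) ≤ I' ^ (1/p) := by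
        rw [hPp]
        exact Real.rpow_le_rpow (hJ0 r R hr hRb) (hJI r R hr hRb) (by positivity)
      have h13 : (∫ x in Ioo r R, |g x| ^ q) ^ (1/q) ≤ G ^ (1/q) :=
        Real.rpow_le_rpow hgqnn h11 (by positivity)
      have h14 : (1:ℝ)/p = 1 - 1/q := by rw [hp]; field_simp
      calc |E r R| ≤ ∫ x in Ioo r R, P x * |g x| := h1
        _ ≤ (∫ x in Ioo r R, P x ^ p) ^ (1/p) * (∫ x in Ioo r R, |g x| ^ q) ^ (1/q) := hhold
        _ ≤ I' ^ (1/p) * G ^ (1/q) := by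
            apply mul_le_mul h12 h13 (Real.rpow_nonneg hgqnn _)
            exact Real.rpow_nonneg hI'0 _
        _ = H₀ := by rw [h14, hH₀]
  have habsE : ∀ r R : ℝ, 0 < r → r < R → (R : EReal) < b →
      |σ * ((2*q-1) * E r R)| ≤ H := by
    intro r R h1 h2 h3
    have h4 := hEest r R h1 h2 h3
    have h5 : |σ| = 1 := by rcases hσpm with h | h <;> rw [h] <;> norm_num
    rw [abs_mul, h5, one_mul, abs_mul, abs_of_nonneg (show (0:ℝ) ≤ 2*q-1 by linarith), hH]
    exact mul_le_mul_of_nonneg_left h4 (by linarith)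
  have hK1 : ∀ r R : ℝ, 0 < r → r < R → (R : EReal) < b →
      |c| * J r R - H ≤ Φ R - Φ r := by
    intro r R h1 h2 h3
    have h4 := hKI r R h1 h2 h3
    have h5 := abs_le.mp (habsE r R h1 h2 h3)
    linarith
  have hK2 : ∀ r R : ℝ, 0 < r → r < R → (R : EReal) < b →
      Φ R - Φ r ≤ |c| * I' + H := by
    intro r R h1 h2 h3
    have h4 := hKI r R h1 h2 h3
    have h5 := abs_le.mp (habsE r R h1 h2 h3)
    have h6 : |c| * J r R ≤ |c| * I' :=
      mul_le_mul_of_nonneg_left (hJI r R h1 h3) (abs_nonneg _)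
    linarith
  -- Filters
  have hLbNeBot : Lb.NeBot := by
    rw [hLb]
    by_cases hbT : b = ⊤
    · subst hbT
      have h1 : Tendsto (fun x : ℝ => (x : EReal)) atTop (nhdsWithin ⊤ (Iio ⊤)) := by
        rw [tendsto_nhdsWithin_iff]
        refine ⟨EReal.tendsto_nhds_top_iff_real.mpr fun x => ?_,
          Eventually.of_forall fun x => EReal.coe_lt_top x⟩
        filter_upwards [eventually_gt_atTop x] with a ha
        exact EReal.coe_lt_coe_iff.mpr ha
      exact Filter.neBot_of_le (tendsto_iff_comap.mp h1)
    · have hbB : b ≠ ⊥ := by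
        intro h
        rw [h] at hb
        exact absurd hb (by simp)
      have hBcoe : ((b.toReal : ℝ) : EReal) = b := EReal.coe_toReal hbT hbB
      have h1 : Tendsto (fun x : ℝ => (x : EReal)) (nhdsWithin b.toReal (Iio b.toReal))
          (nhdsWithin b (Iio b)) := by
        rw [tendsto_nhdsWithin_iff]
        constructor
        · have h2 : Tendsto (fun x : ℝ => (x : EReal)) (nhdsWithin b.toReal (Iio b.toReal))
              (nhds ((b.toReal : ℝ) : EReal)) :=
            (continuous_coe_real_ereal.tendsto b.toReal).mono_left nhdsWithin_le_nhds
          rwa [hBcoe] at h2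
        · filter_upwards [self_mem_nhdsWithin] with x hx
          rw [← hBcoe]
          exact EReal.coe_lt_coe_iff.mpr hx
      exact Filter.neBot_of_le (tendsto_iff_comap.mp h1)
  have hevR : ∀ R0 : ℝ, (R0 : EReal) < b → ∀ᶠ R in Lb, R0 < R ∧ (R : EReal) < b := by
    intro R0 hR0
    rw [hLb, eventually_comap]
    filter_upwards [self_mem_nhdsWithin,
      mem_nhdsWithin_of_mem_nhds (isOpen_Ioi.mem_nhds hR0)] with y hy1 hy2 x hxy
    subst hxy
    exact ⟨EReal.coe_lt_coe_iff.mp hy2, hy1⟩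
  have hevr : ∀ r0 : ℝ, 0 < r0 → ∀ᶠ r in L0, 0 < r ∧ r < r0 := by
    intro r0 hr0
    rw [hL0]
    filter_upwards [self_mem_nhdsWithin,
      mem_nhdsWithin_of_mem_nhds (isOpen_Iio.mem_nhds hr0)] with r h1 h2
    exact ⟨h1, h2⟩
  haveI hL0NeBot : L0.NeBot := by rw [hL0]; infer_instance
  -- liminf/limsup dance
  have hJH : ∀ r R : ℝ, 0 < r → r < R → (R : EReal) < b → |c| * J r R ≤ H := by
    intro r0 R0 hr0 hrR0 hR0b
    have hJmono : ∀ r R : ℝ, 0 < r → r ≤ r0 → R0 ≤ R → (R : EReal) < b → J r0 R0 ≤ J r R := by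
      intro r R h1 h2 h3 h4
      refine setIntegral_mono_set (hInt.mono_set fun x hx => hIcc h1 h4 (Ioo_subset_Icc_self hx))
        ?_ (HasSubset.Subset.eventuallyLE (Ioo_subset_Ioo h2 h3))
      filter_upwards [ae_restrict_mem measurableSet_Ioo] with x hx
      exact hF_nonneg x (hIcc h1 h4 (Ioo_subset_Icc_self hx))
    have hcb : IsCoboundedUnder (· ≥ ·) Lb Φ := by
      apply isCoboundedUnder_ge_of_eventually_le Lb (x := Φ r0 + (|c| * I' + H))
      filter_upwards [hevR R0 hR0b] with R hR
      have h7 := hK2 r0 R hr0 (lt_trans hrR0 hR.1) hR.2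
      linarith
    have hLlow : ∀ r : ℝ, 0 < r → r ≤ r0 → Φ r + (|c| * J r0 R0 - H) ≤ liminf Φ Lb := by
      intro r hr hrr0
      apply le_liminf_of_le hcb
      filter_upwards [hevR R0 hR0b] with R hR
      have h1 := hK1 r R hr (lt_of_le_of_lt hrr0 (lt_trans hrR0 hR.1)) hR.2
      have h2 := hJmono r R hr hrr0 hR.1.le hR.2
      have h3 : |c| * J r0 R0 ≤ |c| * J r R := mul_le_mul_of_nonneg_left h2 (abs_nonneg _)
      linarith
    have hM : limsup Φ L0 ≤ liminf Φ Lb - (|c| * J r0 R0 - H) := by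
      apply limsup_le_of_le
      · apply isCoboundedUnder_le_of_eventually_le L0 (x := Φ R0 - (|c| * I' + H))
        filter_upwards [hevr r0 hr0] with r hr
        have h7 := hK2 r R0 hr.1 (lt_trans hr.2 hrR0) hR0b
        linarith
      · filter_upwards [hevr r0 hr0] with r hr
        have h8 := hLlow r hr.1 hr.2.le
        linarith
    have hbd : liminf Φ Lb - limsup Φ L0 ≤ 0 := hbdry
    linarith
  -- Exhaustion
  have hIH : |c| * I' ≤ H := by
    obtain ⟨y, hy0, hyb⟩ := exists_between hb
    have hyT : y ≠ ⊤ := (lt_of_lt_of_le hyb le_top).ne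
    have hyB : y ≠ ⊥ := (lt_of_le_of_lt bot_le hy0).ne'
    set m := y.toReal with hm
    have hmcoe : (m : EReal) = y := EReal.coe_toReal hyT hyB
    have hm0 : 0 < m := by
      rw [← EReal.coe_lt_coe_iff]
      rw [hmcoe]
      exact_mod_cast hy0
    have hmb : (m : EReal) < b := hmcoe ▸ hyb
    have hbB : b ≠ ⊥ := (lt_trans (lt_of_le_of_lt bot_le hy0) hyb).ne'
    set Rs : ℕ → ℝ := fun n => if b = ⊤ then (n:ℝ)+1 else b.toReal - 1/(n+1) with hRs
    have hRsb : ∀ n, (Rs n : EReal) < b := by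
      intro n
      by_cases hbT : b = ⊤
      · simp only [hRs, if_pos hbT, hbT]
        exact EReal.coe_lt_top _
      · have hBcoe : ((b.toReal : ℝ) : EReal) = b := EReal.coe_toReal hbT hbB
        simp only [hRs, if_neg hbT]
        conv_rhs => rw [← hBcoe]
        rw [EReal.coe_lt_coe_iff]
        have : (0:ℝ) < 1/(n+1) := by positivity
        linarith
    have hRsmono : Monotone Rs := by
      intro i j hij
      by_cases hbT : b = ⊤ <;> simp only [hRs, if_pos, if_neg, hbT, if_true, if_false]
      · have : (i:ℝ) ≤ j := Nat.cast_le.mpr hij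
        linarith
      · have h1 : (1:ℝ)/(j+1) ≤ 1/(i+1) := by
          apply one_div_le_one_div_of_le (by positivity)
          have : (i:ℝ) ≤ j := Nat.cast_le.mpr hij
          linarith
        linarith
    have hRscof : ∀ x : ℝ, (x : EReal) < b → ∃ n, x < Rs n := by
      intro x hx
      by_cases hbT : b = ⊤
      · obtain ⟨n, hn⟩ := exists_nat_gt x
        exact ⟨n, by simp only [hRs, if_pos hbT]; linarith⟩
      · have hBcoe : ((b.toReal : ℝ) : EReal) = b := EReal.coe_toReal hbT hbB
        have hx' : x < b.toReal := by
          rw [← EReal.coe_lt_coe_iff, hBcoe]; exact hx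
        obtain ⟨n, hn⟩ := exists_nat_one_div_lt (sub_pos.2 hx')
        exact ⟨n, by simp only [hRs, if_neg hbT]; linarith⟩
    set sn : ℕ → Set ℝ := fun n => Ioo (m/(n+1)) (Rs n) with hsn
    have hsnmono : Monotone sn := by
      intro i j hij
      apply Ioo_subset_Ioo
      · apply div_le_div_of_nonneg_left hm0.le (by positivity)
        have : (i:ℝ) ≤ j := Nat.cast_le.mpr hij
        linarith
      · exact hRsmono hij
    have hsunion : ⋃ n, sn n = S := by
      apply Subset.antisymm
      · apply iUnion_subset
        intro n x hx
        have h0x : 0 < x := lt_trans (by positivity) hx.1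
        exact ⟨h0x, lt_trans (EReal.coe_lt_coe_iff.mpr hx.2) (hRsb n)⟩
      · intro x hx
        obtain ⟨n1, hn1⟩ := exists_nat_one_div_lt (div_pos hx.1 hm0)
        obtain ⟨n2, hn2⟩ := hRscof x hx.2
        refine mem_iUnion.mpr ⟨max n1 n2, ?_, ?_⟩
        · have h1 : m/((n1:ℝ)+1) < x := by
            calc m/((n1:ℝ)+1) = m * (1/((n1:ℝ)+1)) := by ring
              _ < m * (x/m) := mul_lt_mul_of_pos_left hn1 hm0
              _ = x := by field_simp
          have h2 : m/((max n1 n2 : ℕ):ℝ)+1 ≤ 0 ∨ True := Or.inr trivial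
          have h3 : m/(((max n1 n2 : ℕ):ℝ)+1) ≤ m/((n1:ℝ)+1) := by
            apply div_le_div_of_nonneg_left hm0.le (by positivity)
            have : (n1:ℝ) ≤ ((max n1 n2 : ℕ):ℝ) := Nat.cast_le.mpr (le_max_left _ _)
            linarith
          exact lt_of_le_of_lt h3 h1
        · exact lt_of_lt_of_le hn2 (hRsmono (le_max_right _ _))
    have htend : Tendsto (fun n => ∫ x in sn n, F x) atTop (nhds I') := by
      have h := tendsto_setIntegral_of_monotone (fun n => measurableSet_Ioo) hsnmono
        (hsunion ▸ hInt)
      rwa [hsunion] at h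
    have hbound : ∀ n, |c| * ∫ x in sn n, F x ≤ H := by
      intro n
      rcases lt_or_ge (m/((n:ℝ)+1)) (Rs n) with hlt | hle
      · exact hJH _ _ (by positivity) hlt (hRsb n)
      · have hempty : sn n = ∅ := Set.Ioo_eq_empty (not_lt.mpr hle)
        rw [hempty]
        simpa using hH0
    exact le_of_tendsto (htend.const_mul |c|) (Eventually.of_forall hbound)
  -- Final algebra
  have hcabs : (0:ℝ) < |c| := abs_pos.2 hc0
  show I' ≤ ((2 * q - 1) / |c|) ^ q * G
  rcases eq_or_lt_of_le hI'0 with h0 | hIpos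
  · rw [← h0]; exact mul_nonneg hC0 hG0
  · have ht : (0:ℝ) < I' ^ (1/q) := Real.rpow_pos_of_pos hIpos _
    have e : I' ^ (1 - 1/q) * I' ^ (1/q) = I' := by
      rw [← Real.rpow_add hIpos, show (1-1/q)+(1/q) = (1:ℝ) by ring, Real.rpow_one]
    have h3 : (|c| * I' ^ (1/q)) * I' ≤ ((2*q-1) * G ^ (1/q)) * I' := by
      have h4 : (|c| * I') * I' ^ (1/q) ≤ H * I' ^ (1/q) :=
        mul_le_mul_of_nonneg_right hIH ht.le
      calc (|c| * I' ^ (1/q)) * I' = (|c| * I') * I' ^ (1/q) := by ring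
        _ ≤ H * I' ^ (1/q) := h4
        _ = (2*q-1) * G ^ (1/q) * (I' ^ (1 - 1/q) * I' ^ (1/q)) := by rw [hH, hH₀]; ring
        _ = ((2*q-1) * G ^ (1/q)) * I' := by rw [e]
    have h5 : |c| * I' ^ (1/q) ≤ (2*q-1) * G ^ (1/q) := le_of_mul_le_mul_right h3 hIpos
    have h6 : (|c| * I' ^ (1/q)) ^ q ≤ ((2*q-1) * G ^ (1/q)) ^ q :=
      Real.rpow_le_rpow (mul_nonneg (abs_nonneg _) ht.le) h5 hq0.le
    rw [Real.mul_rpow (abs_nonneg _) ht.le,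
      Real.mul_rpow (by linarith : (0:ℝ) ≤ 2*q-1) (Real.rpow_nonneg hG0 _),
      ← Real.rpow_mul hI'0, ← Real.rpow_mul hG0,
      show (1/q)*q = (1:ℝ) by field_simp, Real.rpow_one, Real.rpow_one] at h6
    rw [Real.div_rpow (by linarith : (0:ℝ) ≤ 2*q-1) (abs_nonneg _), div_mul_eq_mul_div,
      le_div_iff₀ (Real.rpow_pos_of_pos hcabs q)]
    calc I' * |c| ^ q = |c| ^ q * I' := by ring
      _ ≤ (2*q-1) ^ q * G := h6
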